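/- Let S be a semigroup satisfying the identity x·y·z·x·y = x·y for all x, y, z ∈ S, and suppose that for all x, y, z, u, w ∈ S, x·y·z = x·y·w·z or x·y·z = x·u·y·z. Then for all x, y ∈ S, x·y·y = x·y or y·y·x = y·x. -/
import Mathlib


theorem stmt_14 {S : Type*} [Semigroup S]
    (hGRB : ∀ x y z : S, x * y * z * x * y = x * y)
    (hI : ∀ x y z u w : S, x * y * z = x * y * w * z ∨ x * y * z = x * u * y * z) :
    ∀ x y : S, x * y * y = x * y ∨ y * y * x = y * x := by
  -- every product of two elements is idempotent
  have idem : ∀ a b : S, (a * b) * (a * b) = a * b := by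
    intro a b
    have hg := hGRB a b b
    rcases hI a b (a * b) b b with h | h
    · have : a * b * b * (a * b) = a * b := by
        rw [show a * b * b * (a * b) = a * b * b * a * b by rw [mul_assoc (a*b*b) a b]]
        exact hg
      exact h.trans this
    · have : a * b * b * (a * b) = a * b := by
        rw [show a * b * b * (a * b) = a * b * b * a * b by rw [mul_assoc (a*b*b) a b]]
        exact hg
      exact h.trans this
  intro x y
  rcases hI y x y y y with h | h
  · -- y*x*y = y*x*y*y ; multiply on the left by x
    left
    have h1 : x * (y * x * y) = x * (y * x * y * y) := by rw [← h]
    have e1 : x * (y * x * y) = x * y := by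
      calc x * (y * x * y) = (x * y) * (x * y) := by
            simp only [mul_assoc]
        _ = x * y := idem x y
    have e2 : x * (y * x * y * y) = x * y * y := by
      calc x * (y * x * y * y) = ((x * y) * (x * y)) * y := by
            simp only [mul_assoc]
        _ = (x * y) * y := by rw [idem x y]
    rw [← e2, ← h1, e1]
  · -- y*x*y = y*y*x*y ; multiply on the right by x
    right
    have h1 : (y * x * y) * x = (y * y * x * y) * x := by rw [← h]
    have e1 : (y * x * y) * x = y * x := by
      calc (y * x * y) * x = (y * x) * (y * x) := by
            simp only [mul_assoc]
        _ = y * x := idem y x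
    have e2 : (y * y * x * y) * x = y * y * x := by
      calc (y * y * x * y) * x = y * ((y * x) * (y * x)) := by
            simp only [mul_assoc]
        _ = y * (y * x) := by rw [idem y x]
        _ = y * y * x := by rw [mul_assoc]
    rw [← e2, ← h1, e1]
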